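/- Let c̄₀ ≠ 0 and suppose f satisfies f''(u) - c̄₀ (1 + f'(u)²) = 0 and g satisfies g''(v) + c̄₀ (g'(v)² - 1) = 0 on open intervals with |g'| < 1. Then f(u) + g(v) = (1/c̄₀) ln( |e^{c̄₀v} - c₃ e^{-c̄₀v}| / |cos(c̄₀u + c₄)| ) + b for suitable constants c₃ ≠ 0, c₄, b (up to relabeling of variables: f solves the cos-type equation in u and g the exponential-type equation in v). -/

import Mathlib

lemma const_of_deriv0 {a b : ℝ} {F : ℝ → ℝ}
    (h : ∀ x ∈ Set.Ioo a b, HasDerivAt F 0 x) {x y : ℝ}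
    (hx : x ∈ Set.Ioo a b) (hy : y ∈ Set.Ioo a b) : F x = F y := by
  apply (convex_Ioo a b).is_const_of_fderivWithin_eq_zero
    (fun z hz => (h z hz).differentiableAt.differentiableWithinAt) _ hx hy
  intro z hz
  rw [fderivWithin_of_isOpen isOpen_Ioo hz, (h z hz).hasFDerivAt.fderiv]
  ext; simp

theorem stmt_19 (c₀ α β γ δ : ℝ) (hc₀ : c₀ ≠ 0) (hαβ : α < β) (hγδ : γ < δ)
    (f g : ℝ → ℝ)
    (hfd : ∀ u ∈ Set.Ioo α β, DifferentiableAt ℝ f u)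
    (hfd2 : ∀ u ∈ Set.Ioo α β, DifferentiableAt ℝ (deriv f) u)
    (hgd : ∀ v ∈ Set.Ioo γ δ, DifferentiableAt ℝ g v)
    (hgd2 : ∀ v ∈ Set.Ioo γ δ, DifferentiableAt ℝ (deriv g) v)
    (hgsp : ∀ v ∈ Set.Ioo γ δ, |deriv g v| < 1)
    (hfode : ∀ u ∈ Set.Ioo α β,
      deriv (deriv f) u - c₀ * (1 + (deriv f u) ^ 2) = 0)
    (hgode : ∀ v ∈ Set.Ioo γ δ,
      deriv (deriv g) v + c₀ * ((deriv g v) ^ 2 - 1) = 0) :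
    ∃ c₃ c₄ b : ℝ, c₃ ≠ 0 ∧ ∀ u ∈ Set.Ioo α β, ∀ v ∈ Set.Ioo γ δ,
      f u + g v = (1 / c₀) *
        Real.log (|Real.exp (c₀ * v) - c₃ * Real.exp (-(c₀ * v))|
          / |Real.cos (c₀ * u + c₄)|) + b := by
  set u₀ : ℝ := (α + β) / 2 with hu₀def
  set v₀ : ℝ := (γ + δ) / 2 with hv₀def
  have hu₀ : u₀ ∈ Set.Ioo α β := ⟨by simp [hu₀def]; linarith, by simp [hu₀def]; linarith⟩
  have hv₀ : v₀ ∈ Set.Ioo γ δ := ⟨by simp [hv₀def]; linarith, by simp [hv₀def]; linarith⟩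
  -- f part
  set c₄ : ℝ := Real.arctan (deriv f u₀) - c₀ * u₀ with hc₄def
  have harc : ∀ u ∈ Set.Ioo α β, Real.arctan (deriv f u) = c₀ * u + c₄ := by
    intro u hu
    have key : ∀ x ∈ Set.Ioo α β,
        HasDerivAt (fun u => Real.arctan (deriv f u) - c₀ * u) 0 x := by
      intro x hx
      have hx2 := (hfd2 x hx).hasDerivAt
      have h1 := (Real.hasDerivAt_arctan (deriv f x)).comp x hx2
      have h2 := h1.sub ((hasDerivAt_id x).const_mul c₀)
      convert h2 using 1
      · rfl
      · rfl
      · rfl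
      have hode := hfode x hx
      have hpos : (0:ℝ) < 1 + (deriv f x) ^ 2 := by positivity
      have hval : deriv (deriv f) x = c₀ * (1 + (deriv f x) ^ 2) := by linarith
      rw [hval]
      field_simp
      ring
    have := const_of_deriv0 key hu hu₀
    rw [hc₄def]
    linarith
  have hcospos : ∀ u ∈ Set.Ioo α β, 0 < Real.cos (c₀ * u + c₄) := by
    intro u hu
    rw [← harc u hu]
    exact Real.cos_pos_of_mem_Ioo
      ⟨Real.neg_pi_div_two_lt_arctan _, Real.arctan_lt_pi_div_two _⟩
  have htan : ∀ u ∈ Set.Ioo α β, deriv f u = Real.tan (c₀ * u + c₄) := by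
    intro u hu
    rw [← harc u hu, Real.tan_arctan]
  set b₁ : ℝ := f u₀ + (1 / c₀) * Real.log (Real.cos (c₀ * u₀ + c₄)) with hb₁def
  have hfval : ∀ u ∈ Set.Ioo α β,
      f u + (1 / c₀) * Real.log (Real.cos (c₀ * u + c₄)) = b₁ := by
    intro u hu
    have key : ∀ x ∈ Set.Ioo α β,
        HasDerivAt (fun u => f u + (1 / c₀) * Real.log (Real.cos (c₀ * u + c₄))) 0 x := by
      intro x hx
      have haff : HasDerivAt (fun u : ℝ => c₀ * u + c₄) c₀ x := by
        simpa using ((hasDerivAt_id x).const_mul c₀).add_const c₄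
      have hcos : HasDerivAt (fun u => Real.cos (c₀ * u + c₄))
          (-Real.sin (c₀ * x + c₄) * c₀) x :=
        (Real.hasDerivAt_cos (c₀ * x + c₄)).comp (h := fun u => c₀ * u + c₄) x haff
      have hlog := (hcos.log (ne_of_gt (hcospos x hx))).const_mul (1 / c₀)
      have h := ((hfd x hx).hasDerivAt).add hlog
      convert h using 1
      · rfl
      · rfl
      · rfl
      rw [htan x hx, Real.tan_eq_sin_div_cos]
      have hcne := ne_of_gt (hcospos x hx)
      field_simp
      ring
    exact const_of_deriv0 key hu hu₀
  -- g part
  have hq : ∀ v ∈ Set.Ioo γ δ, -1 < deriv g v ∧ deriv g v < 1 := by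
    intro v hv; exact abs_lt.mp (hgsp v hv)
  set c : ℝ := (1 / 2) * (Real.log (1 + deriv g v₀) - Real.log (1 - deriv g v₀)) - c₀ * v₀
    with hcdef
  have hlogq : ∀ v ∈ Set.Ioo γ δ,
      (1 / 2) * (Real.log (1 + deriv g v) - Real.log (1 - deriv g v)) = c₀ * v + c := by
    intro v hv
    have key : ∀ x ∈ Set.Ioo γ δ, HasDerivAt (fun v =>
        (1 / 2) * (Real.log (1 + deriv g v) - Real.log (1 - deriv g v)) - c₀ * v) 0 x := by
      intro x hx
      obtain ⟨hx1, hx2⟩ := hq x hx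
      have hp1 : (0:ℝ) < 1 + deriv g x := by linarith
      have hp2 : (0:ℝ) < 1 - deriv g x := by linarith
      have hd := (hgd2 x hx).hasDerivAt
      have h1 : HasDerivAt (fun v => 1 + deriv g v) (deriv (deriv g) x) x := by
        exact hd.const_add 1
      have h2 : HasDerivAt (fun v => 1 - deriv g v) (-(deriv (deriv g) x)) x := by
        exact hd.const_sub 1
      have hl1 := h1.log (ne_of_gt hp1)
      have hl2 := h2.log (ne_of_gt hp2)
      have h := ((hl1.sub hl2).const_mul (1 / 2)).sub ((hasDerivAt_id x).const_mul c₀)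
      convert h using 1
      · rfl
      · rfl
      · rfl
      have hode := hgode x hx
      have hval : deriv (deriv g) x = c₀ * ((1 - deriv g x) * (1 + deriv g x)) := by
        nlinarith [hode]
      rw [hval]
      field_simp
      ring
    have := const_of_deriv0 key hv hv₀
    rw [hcdef]
    linarith
  have hqsol : ∀ v ∈ Set.Ioo γ δ,
      1 + deriv g v = Real.exp (2 * (c₀ * v + c)) * (1 - deriv g v) := by
    intro v hv
    obtain ⟨hx1, hx2⟩ := hq v hv
    have hp1 : (0:ℝ) < 1 + deriv g v := by linarith
    have hp2 : (0:ℝ) < 1 - deriv g v := by linarith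
    have h : Real.log (1 + deriv g v) - Real.log (1 - deriv g v) = 2 * (c₀ * v + c) := by
      linear_combination 2 * hlogq v hv
    have h2 := congrArg Real.exp h
    rw [Real.exp_sub, Real.exp_log hp1, Real.exp_log hp2] at h2
    field_simp at h2
    linarith [h2]
  set c₃ : ℝ := -Real.exp (-(2 * c)) with hc₃def
  set E : ℝ → ℝ := fun v => Real.exp (c₀ * v) + Real.exp (-(2 * c)) * Real.exp (-(c₀ * v))
    with hEdef
  have hEpos : ∀ v : ℝ, 0 < E v := by
    intro v; rw [hEdef]; positivity
  set b₂ : ℝ := g v₀ - (1 / c₀) * Real.log (E v₀) with hb₂def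
  have hgval : ∀ v ∈ Set.Ioo γ δ, g v - (1 / c₀) * Real.log (E v) = b₂ := by
    intro v hv
    have key : ∀ x ∈ Set.Ioo γ δ,
        HasDerivAt (fun v => g v - (1 / c₀) * Real.log (E v)) 0 x := by
      intro x hx
      have he1 : HasDerivAt (fun v : ℝ => Real.exp (c₀ * v)) (Real.exp (c₀ * x) * c₀) x :=
        (Real.hasDerivAt_exp (c₀ * x)).comp x (by simpa using (hasDerivAt_id x).const_mul c₀)
      have he2 : HasDerivAt (fun v : ℝ => Real.exp (-(c₀ * v)))
          (Real.exp (-(c₀ * x)) * (-c₀)) x :=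
        (Real.hasDerivAt_exp (-(c₀ * x))).comp (h := fun v => -(c₀ * v)) x
          (by have := ((hasDerivAt_id x).const_mul c₀).neg; simp only [id, mul_one] at this; exact this)
      have hE : HasDerivAt E
          (Real.exp (c₀ * x) * c₀ + Real.exp (-(2 * c)) * (Real.exp (-(c₀ * x)) * (-c₀))) x :=
        he1.add (he2.const_mul _)
      have hlog := (hE.log (ne_of_gt (hEpos x))).const_mul (1 / c₀)
      have h := ((hgd x hx).hasDerivAt).sub hlog
      convert h using 1
      · rfl
      · rfl
      · rfl
      have hsol := hqsol x hx
      have hA : (0:ℝ) < Real.exp (c₀ * x) := Real.exp_pos _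
      have hC : (0:ℝ) < Real.exp (2 * c) := Real.exp_pos _
      have hexp1 : Real.exp (2 * (c₀ * x + c)) =
          Real.exp (c₀ * x) ^ 2 * Real.exp (2 * c) := by
        rw [show 2 * (c₀ * x + c) = c₀ * x + c₀ * x + 2 * c by ring, Real.exp_add,
          Real.exp_add]
        ring
      have hexp2 : Real.exp (-(2 * c)) = (Real.exp (2 * c))⁻¹ := Real.exp_neg _
      have hexp3 : Real.exp (-(c₀ * x)) = (Real.exp (c₀ * x))⁻¹ := Real.exp_neg _
      rw [hexp1] at hsol
      have hEne : E x ≠ 0 := ne_of_gt (hEpos x)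
      rw [hEdef] at hEne ⊢
      simp only at hEne ⊢
      rw [hexp2, hexp3] at hEne ⊢
      field_simp
      field_simp at hEne hsol
      linear_combination (-1) * hsol
    exact const_of_deriv0 key hv hv₀
  refine ⟨c₃, c₄, b₁ + b₂, by simp [hc₃def, Real.exp_ne_zero], ?_⟩
  intro u hu v hv
  have hEabs : |Real.exp (c₀ * v) - c₃ * Real.exp (-(c₀ * v))| = E v := by
    rw [hc₃def, hEdef]
    simp only [neg_mul, sub_neg_eq_add]
    exact abs_of_pos (by positivity)
  have hcabs : |Real.cos (c₀ * u + c₄)| = Real.cos (c₀ * u + c₄) :=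
    abs_of_pos (hcospos u hu)
  rw [hEabs, hcabs, Real.log_div (ne_of_gt (hEpos v)) (ne_of_gt (hcospos u hu))]
  have h1 := hfval u hu
  have h2 := hgval v hv
  linear_combination h1 + h2
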